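/- Let m ≥ 2 and let G be a finite group whose central quotient G/Z(G) is isomorphic to the dihedral group D_{2m} of order 2m, and let n = |Z(G)|. Then the characteristic polynomial of the adjacency matrix of the commuting graph Γ_G (over the reals) equals (X + 1)^((2m − 1)·n − m − 1) · (X − (n − 1))^m · (X − ((m − 1)·n − 1)); in particular all eigenvalues of Γ_G are integers. -/

import Mathlib

open Polynomial

section AuxCommGraph

open Matrix DihedralGroup


/-- adjacency matrix of a complete graph -/
noncomputable def cliqueMat (α : Type*) [DecidableEq α] : Matrix α α ℝ :=
  Matrix.of fun x y => if x = y then (0:ℝ) else 1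

lemma cliqueMat_charpoly (α : Type*) [DecidableEq α] [Fintype α] [Nonempty α] :
    (cliqueMat α).charpoly =
      (X + 1) ^ (Fintype.card α - 1) * (X - C ((Fintype.card α : ℝ) - 1)) := by
  classical
  set K := FractionRing (Polynomial ℝ)
  have hinj : Function.Injective (algebraMap (Polynomial ℝ) K) :=
    IsFractionRing.injective _ _
  apply hinj
  set φ := algebraMap (Polynomial ℝ) K with hφ
  set a : K := φ (X + 1) with ha
  have haX : φ X = a - 1 := by
    simp [ha, map_add, _root_.map_one]
  have ha0 : a ≠ 0 := by
    rw [ha]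
    intro h
    have : (X + 1 : Polynomial ℝ) = 0 := hinj (by simpa using h)
    have := Polynomial.X_add_C_ne_zero (1 : ℝ)
    simp only [_root_.map_one] at this
    exact this ‹_›
  obtain ⟨c, hc⟩ : ∃ c, Fintype.card α = c + 1 :=
    ⟨Fintype.card α - 1, (Nat.succ_pred_eq_of_pos Fintype.card_pos).symm⟩
  have key : (charmatrix (cliqueMat α)).map φ =
      a • (1 + Matrix.replicateCol (Fin 1) (fun _ => -a⁻¹) * Matrix.replicateRow (Fin 1) (fun _ => (1:K))) := by
    ext x y
    by_cases h : x = y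
    · subst h
      simp only [Matrix.map_apply, charmatrix_apply_eq, cliqueMat, Matrix.of_apply, if_pos rfl,
        Matrix.smul_apply, Matrix.add_apply, Matrix.one_apply_eq, Matrix.mul_apply,
        Matrix.replicateCol_apply, Matrix.replicateRow_apply, Finset.univ_unique, Finset.sum_singleton]
      rw [map_sub, haX]
      simp only [if_true, map_zero, sub_zero, smul_eq_mul]
      erw [mul_one, mul_add, mul_one, mul_neg, mul_inv_cancel₀ ha0]
      ring
    · simp only [Matrix.map_apply, charmatrix_apply_ne _ _ _ h, cliqueMat, Matrix.of_apply,
        if_neg h, Matrix.smul_apply, Matrix.add_apply, Matrix.one_apply_ne h, Matrix.mul_apply,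
        Matrix.replicateCol_apply, Matrix.replicateRow_apply, Finset.univ_unique, Finset.sum_singleton]
      rw [map_neg, _root_.map_one]
      simp only [smul_eq_mul]
      erw [zero_add, mul_one, mul_neg, mul_inv_cancel₀ ha0, _root_.map_one]
  rw [Matrix.charpoly, RingHom.map_det, RingHom.mapMatrix_apply, key, Matrix.det_smul]
  erw [Matrix.det_one_add_replicateCol_mul_replicateRow]
  have hdot : (fun _ : α => (1:K)) ⬝ᵥ (fun _ => -a⁻¹) = (Fintype.card α : K) * (-a⁻¹) := by
    simp [dotProduct, Finset.sum_const, nsmul_eq_mul]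
  have hC : (C ((Fintype.card α : ℝ) - 1) : Polynomial ℝ)
      = ((Fintype.card α : Polynomial ℝ)) - 1 := by
    rw [map_sub, _root_.map_one, map_natCast]
  rw [hdot, _root_.map_mul, map_pow, map_sub, hC, map_sub, _root_.map_one, map_natCast, haX, hc]
  push_cast
  rw [← ha]
  have hinv : a * a⁻¹ = 1 := mul_inv_cancel₀ ha0
  linear_combination (-((c:K) + 1) * a ^ c) * hinv


namespace CommAux

variable {m : ℕ} {G : Type*} [Group G]

/-- block index of a dihedral element -/
def blk (m : ℕ) [NeZero m] : DihedralGroup m → Fin (m+1)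
  | .r _ => 0
  | .sr i => ⟨i.val + 1, Nat.succ_lt_succ (ZMod.val_lt i)⟩

def rotIdx : DihedralGroup m → ZMod m
  | .r i => i
  | .sr _ => 0

section grp

variable [NeZero m] (f : G →* DihedralGroup m)
  (hker : ∀ x : G, f x = 1 ↔ x ∈ Subgroup.center G)

include hker

lemma rot_comm (x₀ : G) (hx₀ : f x₀ = r 1) {x y : G} {i j : ZMod m} (hx : f x = r i) (hy : f y = r j) :
    x * y = y * x := by
  have key : ∀ (w : G) (k : ZMod m), f w = r k →
      ∃ z ∈ Subgroup.center G, w = x₀ ^ k.val * z := by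
    intro w k hw
    refine ⟨(x₀ ^ k.val)⁻¹ * w, ?_, by group⟩
    rw [← hker]
    have hp : f (x₀ ^ k.val) = r k := by
      rw [map_pow, hx₀, r_one_pow, ZMod.natCast_zmod_val]
    rw [_root_.map_mul, _root_.map_inv, hp, hw, inv_mul_cancel]
  obtain ⟨z1, hz1, rfl⟩ := key x i hx
  obtain ⟨z2, hz2, rfl⟩ := key y j hy
  have c1 := Subgroup.mem_center_iff.mp hz1
  have c2 := Subgroup.mem_center_iff.mp hz2
  have e1 : x₀ ^ i.val * z1 * (x₀ ^ j.val * z2) = (x₀ ^ i.val * x₀ ^ j.val) * (z1 * z2) := by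
    rw [mul_assoc, ← mul_assoc z1, ← c1, mul_assoc, ← mul_assoc]
  have e2 : x₀ ^ j.val * z2 * (x₀ ^ i.val * z1) = (x₀ ^ j.val * x₀ ^ i.val) * (z2 * z1) := by
    rw [mul_assoc, ← mul_assoc z2, ← c2, mul_assoc, ← mul_assoc]
  rw [e1, e2, ← pow_add, ← pow_add, Nat.add_comm, c1 z2]

omit hker in
omit [NeZero m] in
lemma inv_sr' (j : ZMod m) : (sr j : DihedralGroup m)⁻¹ = sr j := by
  apply inv_eq_of_mul_eq_one_left
  rw [sr_mul_sr, sub_self, ← one_def]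

lemma rot_sr_not_comm (x₀ : G) (hx₀ : f x₀ = r 1) {x y : G} {i : ZMod m} {j : ZMod m}
    (hx : f x = r i) (hxc : x ∉ Subgroup.center G) (hy : f y = sr j) :
    ¬ x * y = y * x := by
  intro h
  apply hxc
  rw [Subgroup.mem_center_iff]
  intro g
  cases hfg : f g with
  | r k => exact (rot_comm f hker x₀ hx₀ hx hfg).symm
  | sr k =>
    have hw : f (g * y⁻¹) = r (j - k) := by
      rw [_root_.map_mul, _root_.map_inv, hfg, hy, inv_sr' j, sr_mul_sr]
    have hcomm1 : x * (g * y⁻¹) = (g * y⁻¹) * x := rot_comm f hker x₀ hx₀ hx hw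
    calc g * x = g * y⁻¹ * (y * x) := by group
      _ = g * y⁻¹ * (x * y) := by rw [← h]
      _ = (g * y⁻¹ * x) * y := (mul_assoc _ _ _).symm
      _ = (x * (g * y⁻¹)) * y := by rw [← hcomm1]
      _ = x * g := by group

omit [NeZero m] in
lemma sr_comm {x y : G} {i : ZMod m} (hx : f x = sr i) (hy : f y = sr i) :
    x * y = y * x := by
  have hz : x⁻¹ * y ∈ Subgroup.center G := by
    rw [← hker, _root_.map_mul, _root_.map_inv, hx, hy, inv_mul_cancel]
  have c := Subgroup.mem_center_iff.mp hz
  calc x * y = x * (x * (x⁻¹ * y)) := by group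
    _ = x * ((x⁻¹ * y) * x) := by rw [c x]
    _ = y * x := by group

lemma sr_sr_not_comm (x₀ : G) (hx₀ : f x₀ = r 1) {x y : G} {i j : ZMod m} (hx : f x = sr i) (hy : f y = sr j)
    (hij : i ≠ j) : ¬ x * y = y * x := by
  intro h
  have hw : f (x * y) = r (j - i) := by rw [_root_.map_mul, hx, hy, sr_mul_sr]
  have hwnc : x * y ∉ Subgroup.center G := by
    intro hc
    have h1 := (hker _).mpr hc
    rw [hw, one_def] at h1
    exact hij (sub_eq_zero.mp (DihedralGroup.r.inj h1)).symm
  exact rot_sr_not_comm f hker x₀ hx₀ hw hwnc hx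
    (by rw [mul_assoc, ← h, ← mul_assoc])

lemma adj_iff (x₀ : G) (hx₀ : f x₀ = r 1) {x y : G} (hx : x ∉ Subgroup.center G) (hy : y ∉ Subgroup.center G) :
    x * y = y * x ↔ blk m (f x) = blk m (f y) := by
  cases hdx : f x with
  | r i =>
    cases hdy : f y with
    | r j =>
      simp only [blk]
      exact iff_of_true (rot_comm f hker x₀ hx₀ hdx hdy) trivial
    | sr j =>
      refine iff_of_false (rot_sr_not_comm f hker x₀ hx₀ hdx hx hdy) ?_
      simp only [blk]
      exact fun hc => by simpa using (Fin.mk.inj_iff.mp hc)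
  | sr i =>
    cases hdy : f y with
    | r j =>
      refine iff_of_false ?_ ?_
      · intro h
        exact rot_sr_not_comm f hker x₀ hx₀ hdy hy hdx h.symm
      · simp only [blk]
        exact fun hc => by simpa using (Fin.mk.inj_iff.mp hc)
    | sr j =>
      simp only [blk]
      constructor
      · intro h
        by_contra hne
        have hij : i ≠ j := by
          intro hij; subst hij; exact hne rfl
        exact sr_sr_not_comm f hker x₀ hx₀ hdx hdy hij h
      · intro hc
        have hij : i = j := by
          have hv := Fin.mk.inj_iff.mp hc
          have : i.val = j.val := by omega
          calc i = ((i.val : ℕ) : ZMod m) := (ZMod.natCast_zmod_val i).symm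
            _ = ((j.val : ℕ) : ZMod m) := by rw [this]
            _ = j := ZMod.natCast_zmod_val j
        subst hij
        exact sr_comm f hker hdx hdy

end grp

/-- fibers of a map, as a sigma type -/
def fiberSigma {D : Type*} (f : G → D) (p : D → Prop) :
    {x : G // p (f x)} ≃ Σ d : Subtype p, {x : G // f x = d.1} where
  toFun x := ⟨⟨f x.1, x.2⟩, ⟨x.1, rfl⟩⟩
  invFun s := ⟨s.2.1, by rw [s.2.2]; exact s.1.2⟩
  left_inv x := rfl
  right_inv := by
    rintro ⟨⟨d, hd⟩, x, hx⟩
    simp only at hx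
    subst hx
    rfl

end CommAux



end AuxCommGraph

/-- The commuting graph of a group `G`: vertices are the non-central elements,
two distinct vertices are adjacent iff they commute. -/
def commutingGraph (G : Type*) [Group G] : SimpleGraph {x : G // x ∉ Subgroup.center G} where
  Adj x y := x ≠ y ∧ (x : G) * y = (y : G) * x
  symm := ⟨by rintro x y ⟨hne, hc⟩; exact ⟨hne.symm, hc.symm⟩⟩
  loopless := ⟨by rintro x ⟨hne, _⟩; exact hne rfl⟩

open scoped Classical in
/-- The characteristic polynomial (over `ℝ`) of the adjacency matrix of the
commuting graph of `G`. -/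
noncomputable def commCharpoly (G : Type*) [Group G] [Fintype G] : Polynomial ℝ :=
  ((commutingGraph G).adjMatrix ℝ).charpoly

theorem commuting_graph_integral_of_central_quotient_dihedral
    (m : ℕ) (hm : 2 ≤ m) (G : Type*) [Group G] [Fintype G] (n : ℕ)
    (hZ : Nonempty ((G ⧸ Subgroup.center G) ≃* DihedralGroup m))
    (hn : Nat.card (Subgroup.center G) = n) :
    commCharpoly G =
        (X + 1) ^ ((2 * m - 1) * n - m - 1) *
          (X - C ((n : ℝ) - 1)) ^ m *
          (X - C (((m : ℝ) - 1) * n - 1)) ∧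
      ∀ μ : ℝ, (commCharpoly G).IsRoot μ → ∃ k : ℤ, μ = (k : ℝ) := by

  classical
  obtain ⟨e⟩ := hZ
  haveI : NeZero m := ⟨by omega⟩
  let f : G →* DihedralGroup m := e.toMonoidHom.comp (QuotientGroup.mk' (Subgroup.center G))
  have hker : ∀ x : G, f x = 1 ↔ x ∈ Subgroup.center G := by
    intro x
    rw [show f x = e (QuotientGroup.mk' _ x) from rfl, MulEquiv.map_eq_one_iff,
      QuotientGroup.mk'_apply]
    exact QuotientGroup.eq_one_iff x
  have hsurj : Function.Surjective f := by
    intro d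
    obtain ⟨q, hq⟩ := e.surjective d
    obtain ⟨x, hx⟩ := QuotientGroup.mk'_surjective (Subgroup.center G) q
    exact ⟨x, by rw [show f x = e (QuotientGroup.mk' _ x) from rfl, hx, hq]⟩
  obtain ⟨x₀, hx₀⟩ := hsurj (DihedralGroup.r 1)
  have hn1 : 1 ≤ n := by rw [← hn]; exact Nat.card_pos
  -- fiber cardinalities
  have hfib : ∀ d : DihedralGroup m, Nat.card {x : G // f x = d} = n := by
    intro d
    obtain ⟨xd, hxd⟩ := hsurj d
    rw [← hn]
    apply Nat.card_congr
    exact { toFun := fun x => ⟨xd⁻¹ * x.1, by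
              rw [← hker, _root_.map_mul, _root_.map_inv, hxd, x.2, inv_mul_cancel]⟩
            invFun := fun z => ⟨xd * z.1, by
              rw [_root_.map_mul, hxd, (hker _).mpr z.2, mul_one]⟩
            left_inv := fun x => Subtype.ext (by group)
            right_inv := fun z => Subtype.ext (by group) }
  set V := {x : G // x ∉ Subgroup.center G} with hV
  let bV : V → Fin (m+1) := fun v => CommAux.blk m (f v.1)
  have hblockcard : ∀ a : Fin (m+1), Nat.card {v : V // bV v = a} =
      (Nat.card {d : DihedralGroup m // ¬ d = 1 ∧ CommAux.blk m d = a}) * n := by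
    intro a
    have e1 : {v : V // bV v = a} ≃
        Σ d : {d : DihedralGroup m // ¬ d = 1 ∧ CommAux.blk m d = a}, {x : G // f x = d.1} :=
      ((Equiv.subtypeSubtypeEquivSubtypeInter _ _).trans
        (Equiv.subtypeEquivRight (fun x =>
          and_congr_left' (not_congr (hker x)).symm))).trans
        (CommAux.fiberSigma f (fun d => ¬ d = 1 ∧ CommAux.blk m d = a))
    rw [Nat.card_congr e1, Nat.card_eq_fintype_card, Fintype.card_sigma]
    have : ∀ d : {d : DihedralGroup m // ¬ d = 1 ∧ CommAux.blk m d = a},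
        Fintype.card {x : G // f x = d.1} = n := by
      intro d
      rw [← Nat.card_eq_fintype_card, hfib]
    rw [Finset.sum_congr rfl (fun d _ => this d), Finset.sum_const, smul_eq_mul,
      Finset.card_univ, Nat.card_eq_fintype_card]
  have hD0 : Nat.card {d : DihedralGroup m // ¬ d = 1 ∧ CommAux.blk m d = (0 : Fin (m+1))}
      = m - 1 := by
    have e2 : {d : DihedralGroup m // ¬ d = 1 ∧ CommAux.blk m d = (0 : Fin (m+1))} ≃
        {i : ZMod m // ¬ i = 0} :=
      { toFun := fun d => ⟨CommAux.rotIdx d.1, by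
          obtain ⟨d, h1, h2⟩ := d
          cases d with
          | r i =>
            simp only [CommAux.rotIdx]
            intro hi; subst hi; exact h1 (by rw [DihedralGroup.one_def])
          | sr i => exact absurd h2 (by simp [CommAux.blk, Fin.ext_iff])⟩
        invFun := fun i => ⟨DihedralGroup.r i.1, by
            intro hc; rw [DihedralGroup.one_def] at hc; exact i.2 (DihedralGroup.r.inj hc), rfl⟩
        left_inv := by
          rintro ⟨d, h1, h2⟩
          cases d with
          | r i => rfl
          | sr i => exact absurd h2 (by simp [CommAux.blk, Fin.ext_iff])
        right_inv := fun i => rfl }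
    rw [Nat.card_congr e2, Nat.card_eq_fintype_card, Fintype.card_subtype_compl,
      ZMod.card, Fintype.card_subtype_eq]
  have hDsucc : ∀ i : Fin m,
      Nat.card {d : DihedralGroup m // ¬ d = 1 ∧ CommAux.blk m d = i.succ} = 1 := by
    intro i
    rw [Nat.card_eq_one_iff_unique]
    constructor
    · constructor
      intro a b
      apply Subtype.ext
      obtain ⟨da, ha1, ha2⟩ := a
      obtain ⟨db, hb1, hb2⟩ := b
      cases da with
      | r ia => exact absurd ha2 (Fin.succ_ne_zero i).symm
      | sr ia =>
        cases db with
        | r ib => exact absurd hb2 (Fin.succ_ne_zero i).symm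
        | sr ib =>
          simp only [CommAux.blk, Fin.ext_iff, Fin.val_succ] at ha2 hb2
          have hv : ia.val = ib.val := by omega
          have : ia = ib := by
            calc ia = ((ia.val : ℕ) : ZMod m) := (ZMod.natCast_zmod_val ia).symm
              _ = ((ib.val : ℕ) : ZMod m) := by rw [hv]
              _ = ib := ZMod.natCast_zmod_val ib
          subst this
          rfl
    · refine ⟨⟨DihedralGroup.sr ((i : ℕ) : ZMod m), ?_, ?_⟩⟩
      · intro hc; rw [DihedralGroup.one_def] at hc; cases hc
      · apply Fin.ext
        simp [CommAux.blk, ZMod.val_cast_of_lt i.isLt]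
  -- adjacency
  have hadj : ∀ v w : V, (commutingGraph G).Adj v w ↔ (v ≠ w ∧ bV v = bV w) := by
    intro v w
    constructor
    · rintro ⟨hne, hc⟩
      exact ⟨hne, (CommAux.adj_iff f hker x₀ hx₀ v.2 w.2).mp hc⟩
    · rintro ⟨hne, hb⟩
      exact ⟨hne, (CommAux.adj_iff f hker x₀ hx₀ v.2 w.2).mpr hb⟩
  -- block sizes as Fintype.card
  have hB0 : Fintype.card {v : V // bV v = (0 : Fin (m+1))} = (m-1) * n := by
    rw [← Nat.card_eq_fintype_card, hblockcard, hD0]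
  have hBsucc : ∀ i : Fin m, Fintype.card {v : V // bV v = i.succ} = n := by
    intro i
    rw [← Nat.card_eq_fintype_card, hblockcard, hDsucc, one_mul]
  -- the characteristic polynomial
  have hpoly : commCharpoly G =
      (X + 1) ^ ((2 * m - 1) * n - m - 1) *
        (X - C ((n : ℝ) - 1)) ^ m *
        (X - C (((m : ℝ) - 1) * n - 1)) := by
    unfold commCharpoly
    unfold Matrix.charpoly
    have hBT : (((commutingGraph G).adjMatrix ℝ).charmatrix).BlockTriangular bV := by
      intro v w hlt
      have hne : v ≠ w := by
        intro h; subst h; exact lt_irrefl _ hlt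
      rw [Matrix.charmatrix_apply_ne _ _ _ hne]
      have : (commutingGraph G).adjMatrix ℝ v w = 0 := by
        rw [SimpleGraph.adjMatrix_apply, if_neg]
        intro hA
        exact hlt.ne' ((hadj v w).mp hA).2
      rw [this, map_zero, neg_zero]
    rw [hBT.det_fintype]
    have hblock : ∀ a : Fin (m+1),
        (((commutingGraph G).adjMatrix ℝ).charmatrix).toSquareBlock bV a =
          Matrix.charmatrix (cliqueMat {v : V // bV v = a}) := by
      intro a
      ext i j
      rw [Matrix.toSquareBlock_def]
      simp only [Matrix.of_apply]
      by_cases hij : i = j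
      · subst hij
        rw [Matrix.charmatrix_apply_eq, Matrix.charmatrix_apply_eq]
        congr 1
        rw [SimpleGraph.adjMatrix_apply, if_neg ((commutingGraph G).loopless.irrefl (i : V))]
        simp [cliqueMat]
      · have h1 : (i : V) ≠ j := fun h => hij (Subtype.ext h)
        rw [Matrix.charmatrix_apply_ne _ _ _ h1, Matrix.charmatrix_apply_ne _ _ _ hij]
        congr 1
        rw [SimpleGraph.adjMatrix_apply, if_pos ((hadj _ _).mpr ⟨h1, i.2.trans j.2.symm⟩)]
        simp [cliqueMat, hij]
    rw [Finset.prod_congr rfl (fun a _ => by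
      rw [hblock a, ← Matrix.charpoly])]
    haveI hne0 : Nonempty {v : V // bV v = (0 : Fin (m+1))} := by
      apply Fintype.card_pos_iff.mp
      rw [hB0]
      exact Nat.mul_pos (by omega) (by omega)
    haveI hnes : ∀ i : Fin m, Nonempty {v : V // bV v = i.succ} := by
      intro i
      apply Fintype.card_pos_iff.mp
      rw [hBsucc]
      omega
    rw [Fin.prod_univ_succ]
    rw [cliqueMat_charpoly, hB0]
    rw [Finset.prod_congr rfl (fun i _ => by
      rw [cliqueMat_charpoly, hBsucc]), Finset.prod_const, Finset.card_univ, Fintype.card_fin]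
    have hcast : ((((m-1) * n : ℕ)) : ℝ) - 1 = ((m:ℝ) - 1) * n - 1 := by
      rw [Nat.cast_mul, Nat.cast_sub (by omega : 1 ≤ m), Nat.cast_one]
    have hexp : (m-1)*n - 1 + (n-1)*m = (2*m-1)*n - m - 1 := by
      have h1 : (m-1)*n = m*n - n := by rw [Nat.sub_mul, one_mul]
      have h2 : (n-1)*m = n*m - m := by rw [Nat.sub_mul, one_mul]
      have h3 : (2*m-1)*n = 2*(m*n) - n := by rw [Nat.sub_mul, one_mul, mul_assoc]
      have h4 : n*m = m*n := Nat.mul_comm n m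
      have h5 : 2*n ≤ m*n := Nat.mul_le_mul_right n hm
      have h6 : m ≤ m*n := Nat.le_mul_of_pos_right m hn1
      rw [h1, h2, h3, h4]
      omega
    rw [hcast, mul_pow, ← pow_mul, ← hexp, pow_add]
    ring
  refine ⟨hpoly, ?_⟩
  intro μ hroot
  rw [hpoly] at hroot
  simp only [IsRoot, eval_mul, eval_pow, eval_add, eval_sub, eval_X, eval_C, eval_one] at hroot
  rcases mul_eq_zero.mp hroot with h | h
  · rcases mul_eq_zero.mp h with h1 | h1
    · refine ⟨-1, ?_⟩
      by_cases hE : (2*m-1)*n - m - 1 = 0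
      · rw [hE, pow_zero] at h1; exact absurd h1 one_ne_zero
      · have := pow_eq_zero_iff hE |>.mp h1
        push_cast
        linarith
    · have : μ - ((n:ℝ) - 1) = 0 := pow_eq_zero_iff (by omega) |>.mp h1
      exact ⟨(n : ℤ) - 1, by push_cast; linarith⟩
  · exact ⟨(m : ℤ) * n - n - 1, by push_cast; linarith⟩
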